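/- Let P ∈ ℂ[u₀,u₁] be a nonzero homogeneous polynomial and let P̄ be the polynomial obtained by complex-conjugating its coefficients. Define partial self-maps of ℙ¹(ℂ)×ℙ¹(ℂ) by φ([u₀:u₁],[v₀:v₁]) = ([u₀:u₁], [u₁v₁·P̄(u₀,u₁) : u₀v₀·P(u₀,u₁)]) and σ_C([u₀:u₁],[v₀:v₁]) = ([conj u₀ : conj u₁], [conj(u₁v₁) : conj(u₀v₀)]), each defined at the points where the indicated image coordinate pair is nonzero. Then: (i) φ(φ(q)) = q for every q at which both applications are defined; (ii) σ_C(σ_C(q)) = q for every q at which both applications are defined; (iii) φ(σ_C(q)) = σ_C(φ(q)) for every q at which both sides are defined. -/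
import Mathlib


open ComplexConjugate

/-- Evaluation of a polynomial `P ∈ ℂ[u₀,u₁]` at `(a,b)`. -/
noncomputable def evalP (P : MvPolynomial (Fin 2) ℂ) (a b : ℂ) : ℂ :=
  MvPolynomial.eval ![a, b] P

/-- Evaluation at `(a,b)` of the polynomial `P̄` obtained by conjugating the coefficients
of `P`. -/
noncomputable def evalPbar (P : MvPolynomial (Fin 2) ℂ) (a b : ℂ) : ℂ :=
  MvPolynomial.eval ![a, b] (MvPolynomial.map (starRingEnd ℂ) P)

private lemma evalPbar_conj (P : MvPolynomial (Fin 2) ℂ) (a b : ℂ) :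
    evalPbar P (conj a) (conj b) = conj (evalP P a b) := by
  unfold evalP evalPbar
  rw [MvPolynomial.eval_map,
    show (MvPolynomial.eval ![a, b]) P = MvPolynomial.eval₂Hom (RingHom.id ℂ) ![a, b] P from rfl,
    MvPolynomial.map_eval₂Hom]
  show MvPolynomial.eval₂ _ _ P = MvPolynomial.eval₂ _ _ P
  congr 1
  funext x; fin_cases x <;> simp

private lemma evalP_conj (P : MvPolynomial (Fin 2) ℂ) (a b : ℂ) :
    evalP P (conj a) (conj b) = conj (evalPbar P a b) := by
  have h := evalPbar_conj (MvPolynomial.map (starRingEnd ℂ) P) a b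
  have h2 : MvPolynomial.map (starRingEnd ℂ) (MvPolynomial.map (starRingEnd ℂ) P) = P := by
    rw [MvPolynomial.map_map]
    rw [show (starRingEnd ℂ).comp (starRingEnd ℂ) = RingHom.id ℂ from by ext x; simp]
    simp [MvPolynomial.map_id]
  unfold evalP evalPbar at *
  rw [h2] at h
  exact h

private lemma mk_congr {v w : Fin 2 → ℂ} (h : v = w) (hv : v ≠ 0) (hw : w ≠ 0) :
    Projectivization.mk ℂ v hv = Projectivization.mk ℂ w hw := by subst h; rfl

private lemma mk_smul_eq {v w : Fin 2 → ℂ} {c : ℂ} (hveq : v = c • w) (hv : v ≠ 0)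
    (hw : w ≠ 0) : Projectivization.mk ℂ v hv = Projectivization.mk ℂ w hw := by
  have hc : c ≠ 0 := by
    intro h; exact hv (by rw [hveq, h, zero_smul])
  rw [Projectivization.mk_eq_mk_iff]
  exact ⟨Units.mk0 c hc, by rw [hveq]; simp [Units.smul_def]⟩

/-- For a nonzero homogeneous `P ∈ ℂ[u₀,u₁]`, the partial self-maps of `ℙ¹(ℂ) × ℙ¹(ℂ)`
`φ([u₀:u₁],[v₀:v₁]) = ([u₀:u₁], [u₁v₁·P̄(u₀,u₁) : u₀v₀·P(u₀,u₁)])` and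
`σ_C([u₀:u₁],[v₀:v₁]) = ([conj u₀ : conj u₁], [conj(u₁v₁) : conj(u₀v₀)])` satisfy:
(i) `φ ∘ φ = id`, (ii) `σ_C ∘ σ_C = id`, and (iii) `φ ∘ σ_C = σ_C ∘ φ`,
wherever the relevant applications are defined. -/
theorem stmt_8 (P : MvPolynomial (Fin 2) ℂ) (hP : P ≠ 0) (n : ℕ)
    (hhom : P.IsHomogeneous n) :
    -- (i) φ(φ(q)) = q
    (∀ (u₀ u₁ v₀ v₁ : ℂ) (hu : (![u₀, u₁] : Fin 2 → ℂ) ≠ 0)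
        (hv : (![v₀, v₁] : Fin 2 → ℂ) ≠ 0)
        (h1 : (![u₁ * v₁ * evalPbar P u₀ u₁, u₀ * v₀ * evalP P u₀ u₁] : Fin 2 → ℂ) ≠ 0)
        (h2 : (![u₁ * (u₀ * v₀ * evalP P u₀ u₁) * evalPbar P u₀ u₁,
            u₀ * (u₁ * v₁ * evalPbar P u₀ u₁) * evalP P u₀ u₁] : Fin 2 → ℂ) ≠ 0),
      (Projectivization.mk ℂ ![u₀, u₁] hu,
        Projectivization.mk ℂ ![u₁ * (u₀ * v₀ * evalP P u₀ u₁) * evalPbar P u₀ u₁,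
          u₀ * (u₁ * v₁ * evalPbar P u₀ u₁) * evalP P u₀ u₁] h2) =
      (Projectivization.mk ℂ ![u₀, u₁] hu, Projectivization.mk ℂ ![v₀, v₁] hv)) ∧
    -- (ii) σ_C(σ_C(q)) = q
    (∀ (u₀ u₁ v₀ v₁ : ℂ) (hu : (![u₀, u₁] : Fin 2 → ℂ) ≠ 0)
        (hv : (![v₀, v₁] : Fin 2 → ℂ) ≠ 0)
        (hu' : (![conj u₀, conj u₁] : Fin 2 → ℂ) ≠ 0)
        (h1 : (![conj (u₁ * v₁), conj (u₀ * v₀)] : Fin 2 → ℂ) ≠ 0)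
        (hu'' : (![conj (conj u₀), conj (conj u₁)] : Fin 2 → ℂ) ≠ 0)
        (h2 : (![conj (conj u₁ * conj (u₀ * v₀)), conj (conj u₀ * conj (u₁ * v₁))] :
          Fin 2 → ℂ) ≠ 0),
      (Projectivization.mk ℂ ![conj (conj u₀), conj (conj u₁)] hu'',
        Projectivization.mk ℂ
          ![conj (conj u₁ * conj (u₀ * v₀)), conj (conj u₀ * conj (u₁ * v₁))] h2) =
      (Projectivization.mk ℂ ![u₀, u₁] hu, Projectivization.mk ℂ ![v₀, v₁] hv)) ∧
    -- (iii) φ(σ_C(q)) = σ_C(φ(q))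
    (∀ (u₀ u₁ v₀ v₁ : ℂ) (hu : (![u₀, u₁] : Fin 2 → ℂ) ≠ 0)
        (hv : (![v₀, v₁] : Fin 2 → ℂ) ≠ 0)
        (hσ : (![conj (u₁ * v₁), conj (u₀ * v₀)] : Fin 2 → ℂ) ≠ 0)
        (hL : (![conj u₁ * conj (u₀ * v₀) * evalPbar P (conj u₀) (conj u₁),
            conj u₀ * conj (u₁ * v₁) * evalP P (conj u₀) (conj u₁)] : Fin 2 → ℂ) ≠ 0)
        (hφ : (![u₁ * v₁ * evalPbar P u₀ u₁, u₀ * v₀ * evalP P u₀ u₁] : Fin 2 → ℂ) ≠ 0)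
        (hR : (![conj (u₁ * (u₀ * v₀ * evalP P u₀ u₁)),
            conj (u₀ * (u₁ * v₁ * evalPbar P u₀ u₁))] : Fin 2 → ℂ) ≠ 0),
      Projectivization.mk ℂ ![conj u₁ * conj (u₀ * v₀) * evalPbar P (conj u₀) (conj u₁),
          conj u₀ * conj (u₁ * v₁) * evalP P (conj u₀) (conj u₁)] hL =
        Projectivization.mk ℂ ![conj (u₁ * (u₀ * v₀ * evalP P u₀ u₁)),
          conj (u₀ * (u₁ * v₁ * evalPbar P u₀ u₁))] hR) := by
  refine ⟨?_, ?_, ?_⟩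
  · intro u₀ u₁ v₀ v₁ hu hv h1 h2
    refine Prod.ext rfl ?_
    exact mk_smul_eq (c := u₀ * u₁ * evalP P u₀ u₁ * evalPbar P u₀ u₁)
      (by funext i; fin_cases i <;> (simp [smul_eq_mul]; ring)) h2 hv
  · intro u₀ u₁ v₀ v₁ hu hv hu' h1 hu'' h2
    refine Prod.ext ?_ ?_
    · exact mk_congr (by funext i; fin_cases i <;> simp) hu'' hu
    · exact mk_smul_eq (c := u₀ * u₁)
        (by funext i; fin_cases i <;> (simp [smul_eq_mul]; ring)) h2 hv
  · intro u₀ u₁ v₀ v₁ hu hv hσ hL hφ hR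
    exact mk_congr (by
      funext i; fin_cases i <;>
        (simp [evalP_conj, evalPbar_conj, map_mul]; ring)) hL hR
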